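/- Let B be an n×n real expanding matrix with |det B| ∈ ℤ and let D ⊂ ℝⁿ be a finite set with 0 ∈ D and card D = |det B|. Then the Lebesgue measure of the self-affine set K(B,D) equals the reciprocal of the upper Beurling density of μ: |K(B,D)| = (D⁺(μ))⁻¹, as an equality in [0,∞] (so in particular |K(B,D)| = 0 exactly when D⁺(μ) = ∞). -/

import Mathlib

open MeasureTheory Filter
open scoped ENNReal

/-- The upper Beurling density of a positive Borel measure on ℝⁿ:
`D⁺(ν) = limsup_{N→∞} sup_{z} ν(I_N(z)) / Nⁿ`, where `I_N(z)` is the closed cube of side `N`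
centered at `z`. -/
noncomputable def beurlingUpper {n : ℕ} (ν : Measure (EuclideanSpace ℝ (Fin n))) : ℝ≥0∞ :=
  Filter.limsup (fun N : ℝ =>
    ⨆ z : EuclideanSpace ℝ (Fin n),
      ν {y | ∀ i, |y i - z i| ≤ N / 2} / ENNReal.ofReal (N ^ n)) Filter.atTop

/-- The measure `μ = sup_N μ_N`, where
`μ_N = Σ_{d_0,…,d_{N−1} ∈ D} δ_{d_0 + B d_1 + ⋯ + B^{N−1} d_{N−1}}` (sum over all `N`-tuples
of digits, counted with multiplicity). -/
noncomputable def selfAffineMeasure {n : ℕ} (B : Matrix (Fin n) (Fin n) ℝ)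
    (D : Finset (EuclideanSpace ℝ (Fin n))) : Measure (EuclideanSpace ℝ (Fin n)) :=
  ⨆ N : ℕ, Measure.sum (fun f : Fin N → D =>
    Measure.dirac (∑ j : Fin N, Matrix.toEuclideanLin (B ^ (j : ℕ)) (f j)))

open MeasureTheory Filter Matrix
open scoped ENNReal Pointwise Topology Matrix.Norms.L2Operator

/-! ### Generic auxiliary lemmas -/

section Aux
variable {α : Type*} [MeasurableSpace α]

lemma BeurlingAux.iSup_tsum_swap (g : ℕ → ℕ → ℝ≥0∞) (hg : ∀ i, Monotone fun N => g N i) :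
    ⨆ N, ∑' i, g N i = ∑' i, ⨆ N, g N i := by
  have hm : ∀ N, Measurable (g N) := fun N => measurable_of_countable _
  calc ⨆ N, ∑' i, g N i = ⨆ N, ∫⁻ i, g N i ∂Measure.count := by simp [MeasureTheory.lintegral_count]
    _ = ∫⁻ i, ⨆ N, g N i ∂Measure.count := by
        refine (lintegral_iSup hm ?_).symm
        intro a b hab i
        exact hg i hab
    _ = ∑' i, ⨆ N, g N i := MeasureTheory.lintegral_count _

lemma BeurlingAux.measure_iSup_apply (μs : ℕ → Measure α) (hmono : Monotone μs) {s : Set α}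
    (hs : MeasurableSet s) : (⨆ N, μs N) s = ⨆ N, μs N s := by
  have hν : ∀ ⦃f : ℕ → Set α⦄, (∀ i, MeasurableSet (f i)) → Pairwise (Function.onFun Disjoint f) →
      (⨆ N, μs N (⋃ i, f i)) = ∑' i, ⨆ N, μs N (f i) := by
    intro f hf hd
    have : ∀ N, μs N (⋃ i, f i) = ∑' i, μs N (f i) := fun N => measure_iUnion hd hf
    simp_rw [this]
    exact BeurlingAux.iSup_tsum_swap _ (fun i a b hab => Measure.le_iff'.1 (hmono hab) (f i))
  set ν : Measure α := Measure.ofMeasurable (fun t _ => ⨆ N, μs N t) (by simp) hν with hνdef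
  refine le_antisymm ?_ (iSup_le fun N => Measure.le_iff'.1 (le_iSup μs N) s)
  have hle : (⨆ N, μs N) ≤ ν := by
    refine iSup_le fun N => Measure.le_iff.2 fun t ht => ?_
    rw [hνdef, Measure.ofMeasurable_apply t ht]
    exact le_iSup (fun N => μs N t) N
  calc (⨆ N, μs N) s ≤ ν s := Measure.le_iff'.1 hle s
    _ = ⨆ N, μs N s := Measure.ofMeasurable_apply s hs

lemma BeurlingAux.inv_mul_le_one' (a : ℝ≥0∞) : a⁻¹ * a ≤ 1 := by
  rcases eq_or_ne a 0 with rfl | h0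
  · simp
  rcases eq_or_ne a ⊤ with rfl | ht
  · simp
  rw [ENNReal.inv_mul_cancel h0 ht]

end Aux

/-! ### Cube geometry -/

namespace BeurlingAux
variable {n : ℕ}

def cube (z : EuclideanSpace ℝ (Fin n)) (c : ℝ) : Set (EuclideanSpace ℝ (Fin n)) :=
  {y | ∀ i, |y i - z i| ≤ c}

lemma cube_eq_preimage (z : EuclideanSpace ℝ (Fin n)) (c : ℝ) :
    cube z c = (MeasurableEquiv.toLp 2 (Fin n → ℝ)).symm ⁻¹'
      (Set.univ.pi fun i => Set.Icc (z i - c) (z i + c)) := by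
  have hy : ∀ (w : EuclideanSpace ℝ (Fin n)) (i : Fin n),
      (MeasurableEquiv.toLp 2 (Fin n → ℝ)).symm w i = w i := fun _ _ => rfl
  ext y
  simp only [cube, Set.mem_preimage, Set.mem_pi, Set.mem_univ, forall_true_left,
    Set.mem_Icc, Set.mem_setOf_eq, hy]
  refine forall_congr' fun i => ?_
  rw [abs_sub_le_iff]
  constructor
  · rintro ⟨h1, h2⟩
    constructor <;> [linarith; linarith]
  · rintro ⟨h1, h2⟩
    constructor <;> [linarith; linarith]

lemma measurableSet_cube (z : EuclideanSpace ℝ (Fin n)) (c : ℝ) : MeasurableSet (cube z c) := by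
  rw [cube_eq_preimage]
  exact (MeasurableEquiv.toLp 2 (Fin n → ℝ)).symm.measurable
    (MeasurableSet.univ_pi fun i => measurableSet_Icc)

lemma volume_cube (z : EuclideanSpace ℝ (Fin n)) {c : ℝ} (hc : 0 ≤ c) :
    volume (cube z c) = ENNReal.ofReal ((2 * c) ^ n) := by
  rw [cube_eq_preimage]
  rw [(EuclideanSpace.volume_preserving_symm_measurableEquiv_toLp (Fin n)).measure_preimage
    ((MeasurableSet.univ_pi fun i => measurableSet_Icc).nullMeasurableSet)]
  rw [volume_pi_pi]
  simp only [Real.volume_Icc]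
  have : ∀ i : Fin n, z i + c - (z i - c) = 2 * c := fun i => by ring
  simp_rw [this]
  rw [Finset.prod_const, ENNReal.ofReal_pow (by linarith), Finset.card_univ, Fintype.card_fin]

def boxIco (k : Fin n → ℤ) (L : ℝ) : Set (EuclideanSpace ℝ (Fin n)) :=
  {y | ∀ i, y i ∈ Set.Ico ((k i : ℝ) * L) (((k i : ℝ) + 1) * L)}

lemma boxIco_eq_preimage (k : Fin n → ℤ) (L : ℝ) :
    boxIco k L = (MeasurableEquiv.toLp 2 (Fin n → ℝ)).symm ⁻¹'
      (Set.univ.pi fun i => Set.Ico ((k i : ℝ) * L) (((k i : ℝ) + 1) * L)) := by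
  have hy : ∀ (w : EuclideanSpace ℝ (Fin n)) (i : Fin n),
      (MeasurableEquiv.toLp 2 (Fin n → ℝ)).symm w i = w i := fun _ _ => rfl
  ext y
  simp [boxIco, hy]

lemma measurableSet_boxIco (k : Fin n → ℤ) (L : ℝ) : MeasurableSet (boxIco k L) := by
  rw [boxIco_eq_preimage]
  exact (MeasurableEquiv.toLp 2 (Fin n → ℝ)).symm.measurable
    (MeasurableSet.univ_pi fun i => measurableSet_Ico)

lemma volume_boxIco (k : Fin n → ℤ) {L : ℝ} (hL : 0 ≤ L) :
    volume (boxIco k L) = ENNReal.ofReal (L ^ n) := by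
  rw [boxIco_eq_preimage]
  rw [(EuclideanSpace.volume_preserving_symm_measurableEquiv_toLp (Fin n)).measure_preimage
    ((MeasurableSet.univ_pi fun i => measurableSet_Ico).nullMeasurableSet)]
  rw [volume_pi_pi]
  simp only [Real.volume_Ico]
  have : ∀ i : Fin n, ((k i : ℝ) + 1) * L - (k i : ℝ) * L = L := fun i => by ring
  simp_rw [this]
  rw [Finset.prod_const, ENNReal.ofReal_pow hL, Finset.card_univ, Fintype.card_fin]

lemma mem_boxIco_iff_floor {k : Fin n → ℤ} {L : ℝ} (hL : 0 < L)
    (y : EuclideanSpace ℝ (Fin n)) : y ∈ boxIco k L ↔ ∀ i, ⌊y i / L⌋ = k i := by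
  refine forall_congr' fun i => ?_
  rw [Int.floor_eq_iff, Set.mem_Ico]
  constructor
  · rintro ⟨h1, h2⟩
    constructor
    · exact (le_div_iff₀ hL).2 (by linarith)
    · exact (div_lt_iff₀ hL).2 (by linarith [h2])
  · rintro ⟨h1, h2⟩
    constructor
    · calc (k i : ℝ) * L ≤ (y i / L) * L := by nlinarith
        _ = y i := by field_simp
    · calc y i = (y i / L) * L := by field_simp
        _ < ((k i : ℝ) + 1) * L := by nlinarith

lemma coord_norm_le_norm {𝕜 : Type*} [RCLike 𝕜] (x : EuclideanSpace 𝕜 (Fin n)) (i : Fin n) :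
    ‖x i‖ ≤ ‖x‖ := by
  rw [EuclideanSpace.norm_eq, show ‖x i‖ = Real.sqrt (‖x i‖ ^ 2) from
    (Real.sqrt_sq (norm_nonneg _)).symm]
  exact Real.sqrt_le_sqrt (Finset.single_le_sum (f := fun j => ‖x j‖ ^ 2)
    (fun j _ => sq_nonneg _) (Finset.mem_univ i))

lemma norm_le_of_coord_le {x : EuclideanSpace ℝ (Fin n)} {b : ℝ} (hb : 0 ≤ b)
    (h : ∀ i, |x i| ≤ b) : ‖x‖ ≤ Real.sqrt n * b := by
  rw [EuclideanSpace.norm_eq]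
  calc Real.sqrt (∑ i, ‖x i‖ ^ 2) ≤ Real.sqrt (∑ _i : Fin n, b ^ 2) := by
        apply Real.sqrt_le_sqrt
        refine Finset.sum_le_sum fun i _ => ?_
        have := h i
        rw [Real.norm_eq_abs]
        nlinarith [abs_nonneg (x i)]
    _ = Real.sqrt n * b := by
        rw [Finset.sum_const, Finset.card_univ, Fintype.card_fin, nsmul_eq_mul,
          Real.sqrt_mul (by positivity), Real.sqrt_sq hb]

/-! ### Linear algebra and volume -/

lemma toEucl_mul (A C : Matrix (Fin n) (Fin n) ℝ) (x : EuclideanSpace ℝ (Fin n)) :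
    Matrix.toEuclideanLin (A * C) x = Matrix.toEuclideanLin A (Matrix.toEuclideanLin C x) := by
  rw [Matrix.toEuclideanLin_eq_toLin, Matrix.toLin_mul _ (PiLp.basisFun 2 ℝ (Fin n)) _]
  rfl

lemma toEucl_one (x : EuclideanSpace ℝ (Fin n)) :
    Matrix.toEuclideanLin (1 : Matrix (Fin n) (Fin n) ℝ) x = x := by
  rw [Matrix.toEuclideanLin_eq_toLin, Matrix.toLin_one]
  rfl

lemma vol_image_toEucl (A : Matrix (Fin n) (Fin n) ℝ) (S : Set (EuclideanSpace ℝ (Fin n))) :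
    volume (Matrix.toEuclideanLin A '' S) = ENNReal.ofReal |A.det| * volume S := by
  rw [Matrix.toEuclideanLin_eq_toLin]
  rw [Measure.addHaar_image_linearMap volume _ S, LinearMap.det_toLin]

lemma vol_image_translate (v : EuclideanSpace ℝ (Fin n)) (S : Set (EuclideanSpace ℝ (Fin n))) :
    volume ((fun x => x + v) '' S) = volume S := by
  have : (fun x : EuclideanSpace ℝ (Fin n) => x + v) '' S = (fun x => x + -v) ⁻¹' S := by
    ext y
    simp only [Set.mem_image, Set.mem_preimage]
    constructor
    · rintro ⟨x, hx, rfl⟩; simpa using hx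
    · intro h; exact ⟨y + -v, h, by abel⟩
  rw [this, measure_preimage_add_right]

lemma image_set_add (g : EuclideanSpace ℝ (Fin n) →ₗ[ℝ] EuclideanSpace ℝ (Fin n))
    (X Y : Set (EuclideanSpace ℝ (Fin n))) : g '' (X + Y) = g '' X + g '' Y :=
  Set.image_add g.toAddMonoidHom

/-! ### Spectral estimate -/

lemma entry_le_l2norm (M : Matrix (Fin n) (Fin n) ℂ) (i j : Fin n) : ‖M i j‖ ≤ ‖M‖ := by
  have h := M.l2_opNorm_mulVec (EuclideanSpace.single j (1 : ℂ))
  have hnorm1 : ‖EuclideanSpace.single j (1 : ℂ)‖ = 1 := by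
    rw [EuclideanSpace.norm_single]; simp
  rw [hnorm1, mul_one] at h
  set w := (EuclideanSpace.equiv (Fin n) ℂ).symm (M *ᵥ ⇑(EuclideanSpace.single j (1 : ℂ))) with hw
  have hcol : w i = M i j := by
    show (M *ᵥ ⇑(EuclideanSpace.single j (1 : ℂ))) i = M i j
    simp [Matrix.mulVec, dotProduct, EuclideanSpace.single_apply]
  calc ‖M i j‖ = ‖w i‖ := by rw [hcol]
    _ ≤ ‖w‖ := coord_norm_le_norm w i
    _ ≤ ‖M‖ := h

lemma entries_pow_inv_small (B : Matrix (Fin n) (Fin n) ℝ)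
    (hB : ∀ μ ∈ spectrum ℂ (B.map (algebraMap ℝ ℂ)), 1 < ‖μ‖)
    (hdet : IsUnit B.det) {δ : ℝ} (hδ : 0 < δ) :
    ∀ᶠ N in atTop, ∀ i j, |(B⁻¹ ^ N : Matrix (Fin n) (Fin n) ℝ) i j| ≤ δ := by
  classical
  set A : Matrix (Fin n) (Fin n) ℂ := B.map (algebraMap ℝ ℂ) with hA
  set C : Matrix (Fin n) (Fin n) ℂ := B⁻¹.map (algebraMap ℝ ℂ) with hC
  have hCA : C * A = 1 := by
    rw [hC, hA, ← Matrix.map_mul, Matrix.nonsing_inv_mul B hdet]; simp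
  have hAC : A * C = 1 := by
    rw [hC, hA, ← Matrix.map_mul, Matrix.mul_nonsing_inv B hdet]; simp
  set u : (Matrix (Fin n) (Fin n) ℂ)ˣ := ⟨C, A, hCA, hAC⟩ with hu
  have hspec : ∀ lam ∈ spectrum ℂ C, ‖lam‖₊ < 1 := by
    intro lam hlam
    have hlam0 : lam ≠ 0 := by
      rintro rfl
      exact (spectrum.zero_mem_iff ℂ).1 hlam ⟨u, rfl⟩
    have hulam : ((Units.mk0 lam hlam0 : ℂˣ) : ℂ) ∈ spectrum ℂ ((u : Matrix (Fin n) (Fin n) ℂ)) :=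
      hlam
    have hinv := spectrum.inv_mem_iff.1 hulam
    have e1 : ((((Units.mk0 lam hlam0) : ℂˣ)⁻¹ : ℂˣ) : ℂ) = lam⁻¹ := by simp
    have e2 : ((u⁻¹ : _ˣ) : Matrix (Fin n) (Fin n) ℂ) = A := rfl
    rw [e1, e2] at hinv
    have h1 : 1 < ‖lam⁻¹‖ := hB _ hinv
    rw [norm_inv] at h1
    have habs : ‖lam‖ < 1 := by
      rcases lt_or_ge ‖lam‖ 1 with h | h
      · exact h
      · exfalso
        have h2 : ‖lam‖⁻¹ ≤ 1 := by
          rw [inv_le_one_iff₀]; right; exact h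
        linarith
    rw [← NNReal.coe_lt_one, coe_nnnorm]
    exact habs
  have hrad : spectralRadius ℂ C < 1 := by
    by_cases hσ : (spectrum ℂ C).Nonempty
    · exact_mod_cast spectrum.spectralRadius_lt_of_forall_lt_of_nonempty hσ
        (r := 1) (by simpa using hspec)
    · rw [Set.not_nonempty_iff_eq_empty] at hσ
      rw [spectralRadius, hσ]
      simp
  obtain ⟨r, hr1, hr2⟩ := exists_between hrad
  have hgel := spectrum.pow_nnnorm_pow_one_div_tendsto_nhds_spectralRadius C
  have hev : ∀ᶠ N : ℕ in atTop, (‖C ^ N‖₊ : ℝ≥0∞) ^ (1 / (N : ℝ)) < r :=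
    hgel.eventually_lt_const hr1
  have hCN : ∀ᶠ N : ℕ in atTop, (‖C ^ N‖₊ : ℝ≥0∞) ≤ r ^ N := by
    filter_upwards [hev, eventually_ge_atTop 1] with N h hN1
    have hNne : (N : ℝ) ≠ 0 := by positivity
    have hid : (‖C ^ N‖₊ : ℝ≥0∞) = ((‖C ^ N‖₊ : ℝ≥0∞) ^ (1 / (N : ℝ))) ^ (N : ℕ) := by
      rw [← ENNReal.rpow_natCast (((‖C ^ N‖₊ : ℝ≥0∞)) ^ (1 / (N : ℝ))) N, ← ENNReal.rpow_mul,
        one_div, inv_mul_cancel₀ hNne, ENNReal.rpow_one]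
    rw [hid]
    exact pow_le_pow_left' h.le N
  have hpow0 : Tendsto (fun N : ℕ => r ^ N) atTop (𝓝 0) :=
    ENNReal.tendsto_pow_atTop_nhds_zero_of_lt_one hr2
  have htend : Tendsto (fun N : ℕ => (‖C ^ N‖₊ : ℝ≥0∞)) atTop (𝓝 0) := by
    apply tendsto_of_tendsto_of_tendsto_of_le_of_le' tendsto_const_nhds hpow0
    · exact Eventually.of_forall fun N => zero_le
    · exact hCN
  have hsmall : ∀ᶠ N : ℕ in atTop, (‖C ^ N‖₊ : ℝ≥0∞) < ENNReal.ofReal δ :=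
    htend.eventually_lt_const (ENNReal.ofReal_pos.2 hδ)
  filter_upwards [hsmall] with N hN i j
  have hmap : C ^ N = (B⁻¹ ^ N).map (algebraMap ℝ ℂ) := by
    rw [hC, ← RingHom.mapMatrix_apply, ← RingHom.mapMatrix_apply, map_pow]
  have hentry : |(B⁻¹ ^ N : Matrix (Fin n) (Fin n) ℝ) i j| = ‖(C ^ N) i j‖ := by
    rw [hmap]
    simp [Matrix.map_apply]
  rw [hentry]
  calc ‖(C ^ N) i j‖ ≤ ‖C ^ N‖ := entry_le_l2norm _ i j
    _ ≤ δ := by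
      have h2 : (‖C ^ N‖₊ : ℝ≥0∞) ≤ ENNReal.ofReal δ := hN.le
      have h3 : ‖C ^ N‖₊ ≤ δ.toNNReal := by
        rwa [ENNReal.ofReal, ENNReal.coe_le_coe] at h2
      calc ‖C ^ N‖ = (‖C ^ N‖₊ : ℝ) := rfl
        _ ≤ (δ.toNNReal : ℝ) := by exact_mod_cast h3
        _ ≤ δ := by rw [Real.coe_toNNReal δ hδ.le]

end BeurlingAux
namespace BeurlingAux

variable {n : ℕ} (B : Matrix (Fin n) (Fin n) ℝ) (D : Finset (EuclideanSpace ℝ (Fin n)))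

noncomputable def pt (N : ℕ) (f : Fin N → D) : EuclideanSpace ℝ (Fin n) :=
  ∑ j : Fin N, Matrix.toEuclideanLin (B ^ (j : ℕ)) (f j)

noncomputable def muN (N : ℕ) : Measure (EuclideanSpace ℝ (Fin n)) :=
  Measure.sum (fun f : Fin N → D => Measure.dirac (pt B D N f))

lemma muN_apply (N : ℕ) {s : Set (EuclideanSpace ℝ (Fin n))} (hs : MeasurableSet s) :
    muN B D N s = ∑ f : Fin N → D, s.indicator (fun _ => (1 : ℝ≥0∞)) (pt B D N f) := by
  rw [muN, Measure.sum_apply _ hs, tsum_fintype]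
  exact Finset.sum_congr rfl fun f _ => Measure.dirac_apply' _ hs

lemma muN_count (N : ℕ) {s : Set (EuclideanSpace ℝ (Fin n))} (hs : MeasurableSet s)
    [DecidablePred fun f : Fin N → D => pt B D N f ∈ s] :
    muN B D N s = ((Finset.univ.filter fun f : Fin N → D => pt B D N f ∈ s).card : ℝ≥0∞) := by
  rw [muN_apply B D N hs]
  rw [← Finset.sum_boole]
  refine Finset.sum_congr rfl fun f _ => ?_
  by_cases h : pt B D N f ∈ s <;> simp [Set.indicator_apply, h]

lemma muN_mono (hD0 : (0 : EuclideanSpace ℝ (Fin n)) ∈ D) : Monotone (muN B D) := by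
  refine monotone_nat_of_le_succ fun N => ?_
  have hinj : Function.Injective
      (fun f : Fin N → D => (Fin.snoc f ⟨0, hD0⟩ : Fin (N+1) → D)) := by
    intro f g hfg
    funext j
    have := congrFun hfg (Fin.castSucc j)
    simpa [Fin.snoc_castSucc] using this
  have hpt : ∀ f : Fin N → D, pt B D (N + 1) (Fin.snoc f ⟨0, hD0⟩ : _) = pt B D N f := by
    intro f
    rw [pt, Fin.sum_univ_castSucc]
    simp [pt, Fin.snoc_castSucc]
  refine Measure.le_iff.2 fun s hs => ?_
  rw [muN, muN, Measure.sum_apply _ hs, Measure.sum_apply _ hs]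
  calc ∑' f : Fin N → D, Measure.dirac (pt B D N f) s
      = ∑' f : Fin N → D, Measure.dirac (pt B D (N+1) (Fin.snoc f ⟨0, hD0⟩)) s := by
        simp_rw [hpt]
    _ ≤ ∑' g : Fin (N+1) → D, Measure.dirac (pt B D (N+1) g) s :=
        ENNReal.tsum_comp_le_tsum_of_injective hinj _

variable {K : Set (EuclideanSpace ℝ (Fin n))}

/-- Iterated self-affine identity: `Bᴹ K = ⋃_f (K + π_M f)`. -/
lemma image_pow (hK : Matrix.toEuclideanLin B '' K = ⋃ d ∈ D, (fun x => x + d) '' K) (M : ℕ) :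
    Matrix.toEuclideanLin (B ^ M) '' K
      = ⋃ f : Fin M → D, (fun x => x + pt B D M f) '' K := by
  induction M with
  | zero =>
    have h0 : Matrix.toEuclideanLin (B ^ 0) '' K = K := by
      rw [pow_zero]
      rw [show Matrix.toEuclideanLin (1 : Matrix (Fin n) (Fin n) ℝ) '' K = id '' K from
        Set.image_congr fun a _ => toEucl_one a]
      exact Set.image_id K
    rw [h0]
    have hpt0 : ∀ f : Fin 0 → D, pt B D 0 f = 0 := fun f => by
      rw [pt]; exact Finset.sum_of_isEmpty _
    ext x
    simp only [Set.mem_iUnion, Set.mem_image]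
    constructor
    · intro hx
      exact ⟨(fun j => j.elim0), x, hx, by rw [hpt0, add_zero]⟩
    · rintro ⟨f, y, hy, rfl⟩
      rw [hpt0, add_zero]
      exact hy
  | succ M ih =>
    have hsplit : Matrix.toEuclideanLin (B ^ (M + 1)) '' K
        = Matrix.toEuclideanLin (B ^ M) '' (Matrix.toEuclideanLin B '' K) := by
      rw [← Set.image_comp]
      refine Set.image_congr fun a _ => ?_
      rw [pow_succ, toEucl_mul]
      rfl
    rw [hsplit, hK, Set.image_iUnion₂]
    ext x
    simp only [Set.mem_iUnion, Set.mem_image]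
    constructor
    · rintro ⟨d, hd, y, ⟨k, hk, rfl⟩, rfl⟩
      -- x = φM (k + d) = φM k + φM d with k ∈ K
      have hφMk : Matrix.toEuclideanLin (B ^ M) k ∈ Matrix.toEuclideanLin (B ^ M) '' K :=
        ⟨k, hk, rfl⟩
      rw [ih] at hφMk
      obtain ⟨f, hf⟩ := Set.mem_iUnion.1 hφMk
      obtain ⟨y, hy, hyeq⟩ := hf
      refine ⟨Fin.snoc f ⟨d, hd⟩, y, hy, ?_⟩
      have hptsnoc : pt B D (M+1) (Fin.snoc f ⟨d, hd⟩)
          = pt B D M f + Matrix.toEuclideanLin (B ^ M) d := by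
        rw [pt, Fin.sum_univ_castSucc]
        simp [pt, Fin.snoc_castSucc]
      rw [hptsnoc, map_add, ← hyeq]
      show y + (pt B D M f + (Matrix.toEuclideanLin (B ^ M)) d)
          = y + pt B D M f + (Matrix.toEuclideanLin (B ^ M)) d
      rw [add_assoc]
    · rintro ⟨g, y, hy, rfl⟩
      -- decompose g = snoc f d
      set f := (fun j : Fin M => g (Fin.castSucc j)) with hfdef
      set d := g (Fin.last M) with hddef
      have hgd : g = Fin.snoc f d := by
        funext j
        rcases Fin.eq_castSucc_or_eq_last j with ⟨i, rfl⟩ | rfl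
        · rw [Fin.snoc_castSucc]
        · rw [Fin.snoc_last]
      have hptsnoc : pt B D (M+1) g = pt B D M f + Matrix.toEuclideanLin (B ^ M) (d : _) := by
        rw [hgd, pt, Fin.sum_univ_castSucc]
        simp [pt, Fin.snoc_castSucc]
      refine ⟨(d : EuclideanSpace ℝ (Fin n)), d.2, ?_⟩
      have hyf : y + pt B D M f ∈ Matrix.toEuclideanLin (B ^ M) '' K := by
        rw [ih]
        exact Set.mem_iUnion.2 ⟨f, ⟨y, hy, rfl⟩⟩
      obtain ⟨k, hk, hkeq⟩ := hyf
      refine ⟨k + (d : EuclideanSpace ℝ (Fin n)), ⟨k, hk, rfl⟩, ?_⟩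
      rw [map_add, hkeq, hptsnoc]
      abel

end BeurlingAux
namespace BeurlingAux

variable {n : ℕ} {B : Matrix (Fin n) (Fin n) ℝ} {D : Finset (EuclideanSpace ℝ (Fin n))}
  {K : Set (EuclideanSpace ℝ (Fin n))}

lemma pow_mul_pow_inv (hdet : IsUnit B.det) (N : ℕ) : B ^ N * B⁻¹ ^ N = 1 := by
  have h1 : B * B⁻¹ = 1 := Matrix.mul_nonsing_inv B hdet
  have h2 : B⁻¹ * B = 1 := Matrix.nonsing_inv_mul B hdet
  have hcomm : Commute B B⁻¹ := h1.trans h2.symm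
  rw [← hcomm.mul_pow, h1, one_pow]

lemma pow_inv_mul_pow (hdet : IsUnit B.det) (N : ℕ) : B⁻¹ ^ N * B ^ N = 1 := by
  have h1 : B * B⁻¹ = 1 := Matrix.mul_nonsing_inv B hdet
  have h2 : B⁻¹ * B = 1 := Matrix.nonsing_inv_mul B hdet
  have hcomm : Commute B⁻¹ B := h2.trans h1.symm
  rw [← hcomm.mul_pow, h2, one_pow]

lemma toEucl_phi_psi (hdet : IsUnit B.det) (N : ℕ) (x : EuclideanSpace ℝ (Fin n)) :
    Matrix.toEuclideanLin (B ^ N) (Matrix.toEuclideanLin (B⁻¹ ^ N) x) = x := by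
  rw [← toEucl_mul, pow_mul_pow_inv hdet, toEucl_one]

lemma toEucl_psi_phi (hdet : IsUnit B.det) (N : ℕ) (x : EuclideanSpace ℝ (Fin n)) :
    Matrix.toEuclideanLin (B⁻¹ ^ N) (Matrix.toEuclideanLin (B ^ N) x) = x := by
  rw [← toEucl_mul, pow_inv_mul_pow hdet, toEucl_one]

lemma vec_small (hB : ∀ μ ∈ spectrum ℂ (B.map (algebraMap ℝ ℂ)), 1 < ‖μ‖)
    (hdet : IsUnit B.det) (R : ℝ) {δ : ℝ} (hδ : 0 < δ) :
    ∀ᶠ N in atTop, ∀ v : EuclideanSpace ℝ (Fin n), (∀ i, |v i| ≤ R) →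
      ‖Matrix.toEuclideanLin (B⁻¹ ^ N) v‖ ≤ δ := by
  set R' : ℝ := max R 0 with hR'
  have hR'0 : 0 ≤ R' := le_max_right _ _
  have hden : 0 < Real.sqrt n * n * R' + 1 := by positivity
  set ε : ℝ := δ / (Real.sqrt n * n * R' + 1) with hε
  have hε0 : 0 < ε := by positivity
  filter_upwards [entries_pow_inv_small B hB hdet hε0] with N hN v hv
  have hvR' : ∀ i, |v i| ≤ R' := fun i => (hv i).trans (le_max_left _ _)
  have hcoord : ∀ i, (Matrix.toEuclideanLin (B⁻¹ ^ N) v) i = ∑ j, (B⁻¹ ^ N) i j * v j := by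
    intro i
    rfl
  have hbound : ∀ i, |(Matrix.toEuclideanLin (B⁻¹ ^ N) v) i| ≤ n * (ε * R') := by
    intro i
    rw [hcoord i]
    calc |∑ j, (B⁻¹ ^ N) i j * v j| ≤ ∑ j, |(B⁻¹ ^ N) i j * v j| :=
          Finset.abs_sum_le_sum_abs _ _
      _ ≤ ∑ _j : Fin n, ε * R' := by
          refine Finset.sum_le_sum fun j _ => ?_
          rw [abs_mul]
          exact mul_le_mul (hN i j) (hvR' j) (abs_nonneg _) hε0.le
      _ = n * (ε * R') := by
          rw [Finset.sum_const, Finset.card_univ, Fintype.card_fin, nsmul_eq_mul]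
  calc ‖Matrix.toEuclideanLin (B⁻¹ ^ N) v‖ ≤ Real.sqrt n * (n * (ε * R')) :=
        norm_le_of_coord_le (by positivity) hbound
    _ = (Real.sqrt n * n * R') * ε := by ring
    _ ≤ (Real.sqrt n * n * R' + 1) * ε := by nlinarith
    _ = δ := by
        rw [hε]
        field_simp
  
lemma zero_mem_K (hKc : IsCompact K) (hKne : K.Nonempty)
    (hD0 : (0 : EuclideanSpace ℝ (Fin n)) ∈ D)
    (hK : Matrix.toEuclideanLin B '' K = ⋃ d ∈ D, (fun x => x + d) '' K)
    (hB : ∀ μ ∈ spectrum ℂ (B.map (algebraMap ℝ ℂ)), 1 < ‖μ‖)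
    (hdet : IsUnit B.det) : (0 : EuclideanSpace ℝ (Fin n)) ∈ K := by
  have hKB : K ⊆ Matrix.toEuclideanLin B '' K := by
    rw [hK]
    intro x hx
    exact Set.mem_biUnion hD0 ⟨x, hx, add_zero x⟩
  have hsub : ∀ M, K ⊆ Matrix.toEuclideanLin (B ^ M) '' K := by
    intro M
    induction M with
    | zero =>
      intro x hx
      exact ⟨x, hx, by rw [pow_zero]; exact toEucl_one x⟩
    | succ M ih =>
      have hsplit : Matrix.toEuclideanLin (B ^ (M + 1)) '' K
          = Matrix.toEuclideanLin (B ^ M) '' (Matrix.toEuclideanLin B '' K) := by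
        rw [← Set.image_comp]
        refine Set.image_congr fun a _ => ?_
        rw [pow_succ, toEucl_mul]
        rfl
      rw [hsplit]
      exact fun x hx => Set.image_mono hKB (ih hx)
  obtain ⟨x0, hx0⟩ := hKne
  have hyM : ∀ M, Matrix.toEuclideanLin (B⁻¹ ^ M) x0 ∈ K := by
    intro M
    obtain ⟨y, hy, hyeq⟩ := hsub M hx0
    have : y = Matrix.toEuclideanLin (B⁻¹ ^ M) x0 := by
      rw [← hyeq, toEucl_psi_phi hdet]
    rwa [← this]
  have htend : Tendsto (fun M => Matrix.toEuclideanLin (B⁻¹ ^ M) x0) atTop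
      (𝓝 (0 : EuclideanSpace ℝ (Fin n))) := by
    rw [Metric.tendsto_atTop]
    intro ε hε
    have hcoords : ∀ i, |x0 i| ≤ ‖x0‖ := by
      intro i
      rw [← Real.norm_eq_abs]
      exact coord_norm_le_norm x0 i
    obtain ⟨N₀, hN₀⟩ := (vec_small hB hdet ‖x0‖ (half_pos hε)).exists_forall_of_atTop
    exact ⟨N₀, fun M hM => by
      rw [dist_zero_right]
      exact lt_of_le_of_lt (hN₀ M hM x0 hcoords) (half_lt_self hε)⟩
  exact hKc.isClosed.mem_of_tendsto htend (Eventually.of_forall hyM)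

lemma vol_phi_image (hcard : (D.card : ℝ) = |B.det|) (M : ℕ)
    (S : Set (EuclideanSpace ℝ (Fin n))) :
    volume (Matrix.toEuclideanLin (B ^ M) '' S) = (D.card : ℝ≥0∞) ^ M * volume S := by
  rw [vol_image_toEucl]
  congr 1
  rw [Matrix.det_pow, abs_pow, ← hcard, ← ENNReal.ofReal_natCast,
    ← ENNReal.ofReal_pow (by positivity)]

lemma sum_vol_translates (M : ℕ) :
    ∑ f : Fin M → D, volume ((fun x => x + pt B D M f) '' K)
      = (D.card : ℝ≥0∞) ^ M * volume K := by
  have : ∀ f : Fin M → D, volume ((fun x => x + pt B D M f) '' K) = volume K :=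
    fun f => vol_image_translate _ _
  simp_rw [this]
  rw [Finset.sum_const, Finset.card_univ, Fintype.card_fun, Fintype.card_coe, Fintype.card_fin,
    nsmul_eq_mul, Nat.cast_pow]

lemma subsum {ι : Type*} [Fintype ι] (A : ι → Set (EuclideanSpace ℝ (Fin n)))
    (hfin : ∀ i, volume (A i) ≠ ⊤)
    (heq : volume (⋃ i, A i) = ∑ i : ι, volume (A i)) (S : Finset ι) :
    ∑ i ∈ S, volume (A i) ≤ volume (⋃ i ∈ S, A i) := by
  classical
  have hsplit : (⋃ i, A i) = (⋃ i ∈ S, A i) ∪ (⋃ i ∈ (Sᶜ : Finset ι), A i) := by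
    ext x
    simp only [Set.mem_iUnion, Set.mem_union, Finset.mem_compl]
    constructor
    · rintro ⟨i, hi⟩
      by_cases h : i ∈ S
      · exact Or.inl ⟨i, h, hi⟩
      · exact Or.inr ⟨i, h, hi⟩
    · rintro (⟨i, _, hi⟩ | ⟨i, _, hi⟩) <;> exact ⟨i, hi⟩
  have h1 : volume (⋃ i, A i) ≤ volume (⋃ i ∈ S, A i) + volume (⋃ i ∈ (Sᶜ : Finset ι), A i) := by
    rw [hsplit]
    exact measure_union_le _ _
  have h2 : volume (⋃ i ∈ (Sᶜ : Finset ι), A i) ≤ ∑ i ∈ Sᶜ, volume (A i) :=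
    measure_biUnion_finset_le _ _
  have h3 : ∑ i ∈ S, volume (A i) + ∑ i ∈ (Sᶜ : Finset ι), volume (A i) = volume (⋃ i, A i) := by
    rw [heq, Finset.sum_add_sum_compl]
  have hne : ∑ i ∈ (Sᶜ : Finset ι), volume (A i) ≠ ⊤ :=
    (ENNReal.sum_lt_top.mpr fun i _ => (hfin i).lt_top).ne
  have hfinal : ∑ i ∈ S, volume (A i) + ∑ i ∈ (Sᶜ : Finset ι), volume (A i)
      ≤ volume (⋃ i ∈ S, A i) + ∑ i ∈ (Sᶜ : Finset ι), volume (A i) := by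
    rw [h3]
    exact h1.trans (add_le_add_right h2 _)
  exact (ENNReal.add_le_add_iff_right hne).1 hfinal

end BeurlingAux
namespace BeurlingAux

variable {n : ℕ} {B : Matrix (Fin n) (Fin n) ℝ} {D : Finset (EuclideanSpace ℝ (Fin n))}
  {K : Set (EuclideanSpace ℝ (Fin n))}

lemma upper_bound (hD0 : (0 : EuclideanSpace ℝ (Fin n)) ∈ D)
    (hcard : (D.card : ℝ) = |B.det|) (hKc : IsCompact K)
    (hK : Matrix.toEuclideanLin B '' K = ⋃ d ∈ D, (fun x => x + d) '' K)
    (hvol0 : volume K ≠ 0) :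
    Filter.limsup (fun N : ℝ => ⨆ z : EuclideanSpace ℝ (Fin n),
        (⨆ M, muN B D M) (cube z (N / 2)) / ENNReal.ofReal (N ^ n)) atTop
      ≤ (volume K)⁻¹ := by
  classical
  obtain ⟨r, hr⟩ := hKc.isBounded.subset_closedBall (0 : EuclideanSpace ℝ (Fin n))
  set R : ℝ := max r 0 with hRdef
  have hR0 : 0 ≤ R := le_max_right _ _
  have hRK : ∀ x ∈ K, ∀ i, |x i| ≤ R := by
    intro x hx i
    have h1 : ‖x‖ ≤ r := by simpa using hr hx
    have h2 : |x i| ≤ ‖x‖ := by rw [← Real.norm_eq_abs]; exact coord_norm_le_norm x i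
    exact h2.trans (h1.trans (le_max_left _ _))
  have hvolfin : volume K ≠ ⊤ := hKc.measure_lt_top.ne
  -- the key pointwise counting bound
  have key : ∀ (z : EuclideanSpace ℝ (Fin n)) (N : ℝ), 0 < N →
      (⨆ M, muN B D M) (cube z (N / 2)) ≤ ENNReal.ofReal ((N + 2 * R) ^ n) / volume K := by
    intro z N hN
    rw [BeurlingAux.measure_iSup_apply _ (muN_mono B D hD0) (measurableSet_cube z (N / 2))]
    refine iSup_le fun M => ?_
    rw [muN_count B D M (measurableSet_cube _ _)]
    set S : Finset (Fin M → D) :=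
      Finset.univ.filter (fun f : Fin M → D => pt B D M f ∈ cube z (N / 2)) with hS
    have hA : ∀ f : Fin M → D, volume ((fun x => x + pt B D M f) '' K) = volume K :=
      fun f => vol_image_translate _ _
    have heq : volume (⋃ f : Fin M → D, (fun x => x + pt B D M f) '' K)
        = ∑ f : Fin M → D, volume ((fun x => x + pt B D M f) '' K) := by
      rw [← image_pow B D hK M, vol_phi_image hcard, sum_vol_translates]
    have hsub := subsum (fun f : Fin M → D => (fun x => x + pt B D M f) '' K)
      (fun f => by rw [hA]; exact hvolfin) heq S
    have hsumS : ∑ f ∈ S, volume ((fun x => x + pt B D M f) '' K)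
        = (S.card : ℝ≥0∞) * volume K := by
      simp_rw [hA]
      rw [Finset.sum_const, nsmul_eq_mul]
    have hcube : (⋃ f ∈ S, (fun x => x + pt B D M f) '' K) ⊆ cube z (N / 2 + R) := by
      intro y hy
      obtain ⟨f, hfS, hf⟩ := Set.mem_iUnion₂.1 hy
      obtain ⟨x, hx, rfl⟩ := hf
      have hptf : pt B D M f ∈ cube z (N / 2) := (Finset.mem_filter.1 hfS).2
      intro i
      have h1 : |x i| ≤ R := hRK x hx i
      have h2 : |pt B D M f i - z i| ≤ N / 2 := hptf i
      show |x i + pt B D M f i - z i| ≤ N / 2 + R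
      have heq2 : x i + pt B D M f i - z i = x i + (pt B D M f i - z i) := by ring
      rw [heq2]
      calc |x i + (pt B D M f i - z i)| ≤ |x i| + |pt B D M f i - z i| := abs_add_le _ _
        _ ≤ R + N / 2 := add_le_add h1 h2
        _ = N / 2 + R := by ring
    have hvolcube : volume (cube z (N / 2 + R)) = ENNReal.ofReal ((N + 2 * R) ^ n) := by
      rw [volume_cube z (by linarith : (0:ℝ) ≤ N / 2 + R)]
      congr 2
      ring
    have hmain : (S.card : ℝ≥0∞) * volume K ≤ ENNReal.ofReal ((N + 2 * R) ^ n) := by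
      rw [← hsumS, ← hvolcube]
      exact hsub.trans (measure_mono hcube)
    rw [ENNReal.le_div_iff_mul_le (Or.inl hvol0) (Or.inl hvolfin)]
    exact hmain
  -- eventual bound for the quantity inside the limsup
  have hF : ∀ᶠ N : ℝ in atTop,
      (⨆ z : EuclideanSpace ℝ (Fin n),
        (⨆ M, muN B D M) (cube z (N / 2)) / ENNReal.ofReal (N ^ n))
      ≤ ENNReal.ofReal (((N + 2 * R) / N) ^ n) * (volume K)⁻¹ := by
    filter_upwards [eventually_gt_atTop (0 : ℝ)] with N hN
    refine iSup_le fun z => ?_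
    have h1 : (⨆ M, muN B D M) (cube z (N / 2)) / ENNReal.ofReal (N ^ n)
        ≤ (ENNReal.ofReal ((N + 2 * R) ^ n) / volume K) / ENNReal.ofReal (N ^ n) :=
      ENNReal.div_le_div_right (key z N hN) _
    refine h1.trans_eq ?_
    have e1 : ENNReal.ofReal (((N + 2 * R) / N) ^ n)
        = ENNReal.ofReal ((N + 2 * R) ^ n) / ENNReal.ofReal (N ^ n) := by
      rw [div_pow, ENNReal.ofReal_div_of_pos (by positivity)]
    rw [e1, div_eq_mul_inv, div_eq_mul_inv, div_eq_mul_inv]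
    ring
  have hreal : Tendsto (fun N : ℝ => ((N + 2 * R) / N) ^ n) atTop (𝓝 1) := by
    have h1 : Tendsto (fun N : ℝ => (N + 2 * R) / N) atTop (𝓝 1) := by
      have heq : (fun N : ℝ => (N + 2 * R) / N) =ᶠ[atTop] fun N => 1 + 2 * R / N := by
        filter_upwards [eventually_ne_atTop (0 : ℝ)] with N hN
        rw [add_div, div_self hN]
      have h2 : Tendsto (fun N : ℝ => 1 + 2 * R / N) atTop (𝓝 (1 + 0)) :=
        tendsto_const_nhds.add (Tendsto.div_atTop tendsto_const_nhds tendsto_id)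
      rw [add_zero] at h2
      exact Tendsto.congr' heq.symm h2
    have := h1.pow n
    rwa [one_pow] at this
  have htend : Tendsto (fun N : ℝ => ENNReal.ofReal (((N + 2 * R) / N) ^ n) * (volume K)⁻¹)
      atTop (𝓝 ((1 : ℝ≥0∞) * (volume K)⁻¹)) := by
    refine ENNReal.Tendsto.mul_const ?_ (Or.inl one_ne_zero)
    have := (ENNReal.continuous_ofReal.tendsto 1).comp hreal
    simpa [Function.comp_def] using this
  calc Filter.limsup (fun N : ℝ => ⨆ z : EuclideanSpace ℝ (Fin n),
        (⨆ M, muN B D M) (cube z (N / 2)) / ENNReal.ofReal (N ^ n)) atTop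
      ≤ Filter.limsup (fun N : ℝ =>
          ENNReal.ofReal (((N + 2 * R) / N) ^ n) * (volume K)⁻¹) atTop :=
        Filter.limsup_le_limsup hF
    _ = (1 : ℝ≥0∞) * (volume K)⁻¹ := htend.limsup_eq
    _ = (volume K)⁻¹ := one_mul _

end BeurlingAux
namespace BeurlingAux

variable {n : ℕ} {B : Matrix (Fin n) (Fin n) ℝ} {D : Finset (EuclideanSpace ℝ (Fin n))}
  {K : Set (EuclideanSpace ℝ (Fin n))}

lemma lower_bound (hB : ∀ μ ∈ spectrum ℂ (B.map (algebraMap ℝ ℂ)), 1 < ‖μ‖)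
    (hdet : IsUnit B.det) (hD0 : (0 : EuclideanSpace ℝ (Fin n)) ∈ D)
    (hcard : (D.card : ℝ) = |B.det|) (hKc : IsCompact K) (hKne : K.Nonempty)
    (hK : Matrix.toEuclideanLin B '' K = ⋃ d ∈ D, (fun x => x + d) '' K) :
    (volume K)⁻¹ ≤ Filter.limsup (fun N : ℝ => ⨆ z : EuclideanSpace ℝ (Fin n),
        (⨆ M, muN B D M) (cube z (N / 2)) / ENNReal.ofReal (N ^ n)) atTop := by
  classical
  have h0K : (0 : EuclideanSpace ℝ (Fin n)) ∈ K := zero_mem_K hKc hKne hD0 hK hB hdet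
  -- main claim: for every L > 0 the inner sup is at least (volume K)⁻¹
  have main : ∀ L : ℝ, 0 < L → (volume K)⁻¹ ≤ ⨆ z : EuclideanSpace ℝ (Fin n),
      (⨆ M, muN B D M) (cube z (L / 2)) / ENNReal.ofReal (L ^ n) := by
    intro L hL
    set q : ℝ≥0∞ := (D.card : ℝ≥0∞) with hqdef
    have hDne : D.Nonempty := ⟨0, hD0⟩
    have hq0 : q ≠ 0 := by
      simp [hqdef, Finset.card_ne_zero_of_mem hD0]
    have hqt : q ≠ ⊤ := by simp [hqdef]
    set ℓ : ℝ≥0∞ := ENNReal.ofReal (L ^ n) with hℓdef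
    have hℓ0 : ℓ ≠ 0 := by
      simp only [hℓdef, ne_eq, ENNReal.ofReal_eq_zero, not_le]
      positivity
    have hℓt : ℓ ≠ ⊤ := ENNReal.ofReal_ne_top
    set J : Set (EuclideanSpace ℝ (Fin n)) := cube 0 L with hJdef
    set w : ℕ → ℝ≥0∞ := fun N =>
      volume (K + (fun v => Matrix.toEuclideanLin (B⁻¹ ^ N) v) '' J) with hwdef
    -- Claim 1 : (w N)⁻¹ is a lower bound for the sup, for every N
    have claim1 : ∀ N : ℕ, (w N)⁻¹ ≤ ⨆ z : EuclideanSpace ℝ (Fin n),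
        (⨆ M, muN B D M) (cube z (L / 2)) / ℓ := by
      intro N
      set pts : (Fin N → D) → EuclideanSpace ℝ (Fin n) := fun f => pt B D N f with hptsdef
      set SN : Set (EuclideanSpace ℝ (Fin n)) := Matrix.toEuclideanLin (B ^ N) '' K with hSNdef
      have hSN : ∀ f : Fin N → D, pts f ∈ SN := by
        intro f
        rw [hSNdef, image_pow B D hK N]
        exact Set.mem_iUnion.2 ⟨f, ⟨0, h0K, zero_add _⟩⟩
      set flr : EuclideanSpace ℝ (Fin n) → (Fin n → ℤ) := fun y i => ⌊y i / L⌋ with hflrdef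
      set T : Finset (Fin n → ℤ) := Finset.univ.image (fun f : Fin N → D => flr (pts f))
        with hTdef
      have hne : Nonempty (Fin N → D) := ⟨fun _ => ⟨0, hD0⟩⟩
      have hTne : T.Nonempty :=
        ⟨flr (pts (fun _ => ⟨0, hD0⟩)), Finset.mem_image.2 ⟨_, Finset.mem_univ _, rfl⟩⟩
      set ck : (Fin n → ℤ) → ℕ :=
        fun k => (Finset.univ.filter fun f : Fin N → D => flr (pts f) = k).card with hckdef
      have hsum : (Finset.univ : Finset (Fin N → D)).card = ∑ k ∈ T, ck k :=
        Finset.card_eq_sum_card_fiberwise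
          (fun f _ => Finset.mem_image.2 ⟨f, Finset.mem_univ f, rfl⟩)
      obtain ⟨k0, hk0T, hk0max⟩ := T.exists_max_image ck hTne
      have hcount : (Finset.univ : Finset (Fin N → D)).card ≤ T.card * ck k0 := by
        rw [hsum]
        calc ∑ k ∈ T, ck k ≤ T.card • ck k0 :=
              Finset.sum_le_card_nsmul T ck (ck k0) (fun k hk => hk0max k hk)
          _ = T.card * ck k0 := by rw [smul_eq_mul]
      have hcard_univ : ((Finset.univ : Finset (Fin N → D)).card : ℝ≥0∞) = q ^ N := by
        rw [Finset.card_univ, Fintype.card_fun, Fintype.card_coe, Fintype.card_fin,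
          Nat.cast_pow]
      -- membership in boxes
      have hbox_iff : ∀ y : EuclideanSpace ℝ (Fin n), ∀ k, y ∈ boxIco k L ↔ flr y = k := by
        intro y k
        rw [mem_boxIco_iff_floor hL]
        exact ⟨fun h => funext h, fun h i => congrFun h i⟩
      -- the count of the best box
      have hmuN : muN B D N (boxIco k0 L) = (ck k0 : ℝ≥0∞) := by
        rw [muN_count B D N (measurableSet_boxIco k0 L), hckdef]
        congr 1
        refine congrArg Finset.card (Finset.filter_congr fun f _ => ?_)
        rw [hbox_iff]
      -- boxes of T are disjoint and sit inside SN + J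
      have hdisj : (↑T : Set (Fin n → ℤ)).PairwiseDisjoint (fun k => boxIco k L) := by
        intro a _ b _ hab
        refine Set.disjoint_left.2 fun y hya hyb => hab ?_
        rw [hbox_iff] at hya hyb
        rw [← hya, hyb]
      have hboxsub : ∀ k ∈ T, boxIco k L ⊆ SN + J := by
        intro k hk y hy
        obtain ⟨f, _, hf⟩ := Finset.mem_image.1 hk
        have hptsbox : pts f ∈ boxIco k L := (hbox_iff (pts f) k).2 hf
        refine Set.mem_add.2 ⟨pts f, hSN f, y - pts f, ?_, by abel⟩
        intro i
        have h1 := hy i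
        have h2 := hptsbox i
        simp only [Set.mem_Ico] at h1 h2
        have hc : (y - pts f) i - (0 : EuclideanSpace ℝ (Fin n)) i = y i - pts f i := by
          have : (y - pts f) i = y i - pts f i := rfl
          rw [this]
          simp
        rw [hc, abs_le]
        constructor <;> [linarith; linarith]
      have hTbound : (T.card : ℝ≥0∞) * ℓ ≤ volume (SN + J) := by
        have hvolbox : ∀ k ∈ T, volume (boxIco k L) = ℓ := fun k _ => volume_boxIco k hL.le
        calc (T.card : ℝ≥0∞) * ℓ = ∑ k ∈ T, volume (boxIco k L) := by
              rw [Finset.sum_congr rfl hvolbox, Finset.sum_const, nsmul_eq_mul]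
          _ = volume (⋃ k ∈ T, boxIco k L) :=
              (measure_biUnion_finset hdisj (fun k _ => measurableSet_boxIco k L)).symm
          _ ≤ volume (SN + J) := measure_mono (Set.iUnion₂_subset hboxsub)
      -- volume of SN + J
      have hVeq : volume (SN + J) = q ^ N * w N := by
        have hid : Matrix.toEuclideanLin (B ^ N) ''
            ((fun v => Matrix.toEuclideanLin (B⁻¹ ^ N) v) '' J) = J := by
          rw [← Set.image_comp]
          rw [show (⇑(Matrix.toEuclideanLin (B ^ N)) ∘ fun v => Matrix.toEuclideanLin (B⁻¹ ^ N) v)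
            = id from funext fun v => toEucl_phi_psi hdet N v]
          exact Set.image_id J
        have hSJ : SN + J = Matrix.toEuclideanLin (B ^ N) ''
            (K + (fun v => Matrix.toEuclideanLin (B⁻¹ ^ N) v) '' J) := by
          rw [image_set_add (Matrix.toEuclideanLin (B ^ N)), hid, hSNdef]
        rw [hSJ, vol_phi_image hcard, hwdef, hqdef]
      -- the good cube center
      set z0 : EuclideanSpace ℝ (Fin n) :=
        (WithLp.equiv 2 (Fin n → ℝ)).symm (fun i => (k0 i : ℝ) * L + L / 2) with hz0def
      have hz0 : ∀ i, z0 i = (k0 i : ℝ) * L + L / 2 := fun i => rfl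
      have hboxcube : boxIco k0 L ⊆ cube z0 (L / 2) := by
        intro y hy i
        have h1 := hy i
        simp only [Set.mem_Ico] at h1
        rw [hz0, abs_le]
        constructor <;> [linarith; linarith]
      have hμcube : (ck k0 : ℝ≥0∞) ≤ (⨆ M, muN B D M) (cube z0 (L / 2)) := by
        calc (ck k0 : ℝ≥0∞) = muN B D N (boxIco k0 L) := hmuN.symm
          _ ≤ muN B D N (cube z0 (L / 2)) := measure_mono hboxcube
          _ ≤ (⨆ M, muN B D M) (cube z0 (L / 2)) :=
              Measure.le_iff'.1 (le_iSup (muN B D) N) _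
      -- the ENNReal chain
      have c1 : q ^ N ≤ (T.card : ℝ≥0∞) * (ck k0 : ℝ≥0∞) := by
        rw [← hcard_univ]
        exact_mod_cast Nat.cast_le.2 hcount
      have c2 : (T.card : ℝ≥0∞) ≤ q ^ N * w N / ℓ := by
        rw [ENNReal.le_div_iff_mul_le (Or.inl hℓ0) (Or.inl hℓt)]
        rw [← hVeq]
        exact hTbound
      have c3 : q ^ N ≤ q ^ N * (w N * ((ck k0 : ℝ≥0∞) / ℓ)) := by
        calc q ^ N ≤ (T.card : ℝ≥0∞) * (ck k0 : ℝ≥0∞) := c1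
          _ ≤ (q ^ N * w N / ℓ) * (ck k0 : ℝ≥0∞) := mul_le_mul_left c2 _
          _ = q ^ N * (w N * ((ck k0 : ℝ≥0∞) / ℓ)) := by
              rw [div_eq_mul_inv, div_eq_mul_inv]
              ring
      have hqN0 : q ^ N ≠ 0 := pow_ne_zero N hq0
      have hqNt : q ^ N ≠ ⊤ := ENNReal.pow_ne_top hqt
      have c4 : 1 ≤ w N * ((ck k0 : ℝ≥0∞) / ℓ) := by
        have hthis : q ^ N * 1 ≤ q ^ N * (w N * ((ck k0 : ℝ≥0∞) / ℓ)) := by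
          rw [mul_one]
          exact c3
        exact (ENNReal.mul_le_mul_iff_right hqN0 hqNt).1 hthis
      have c5 : (w N)⁻¹ ≤ (ck k0 : ℝ≥0∞) / ℓ := by
        calc (w N)⁻¹ = (w N)⁻¹ * 1 := (mul_one _).symm
          _ ≤ (w N)⁻¹ * (w N * ((ck k0 : ℝ≥0∞) / ℓ)) := mul_le_mul_right c4 _
          _ = ((w N)⁻¹ * w N) * ((ck k0 : ℝ≥0∞) / ℓ) := (mul_assoc _ _ _).symm
          _ ≤ 1 * ((ck k0 : ℝ≥0∞) / ℓ) := mul_le_mul_left (inv_mul_le_one' _) _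
          _ = (ck k0 : ℝ≥0∞) / ℓ := one_mul _
      calc (w N)⁻¹ ≤ (ck k0 : ℝ≥0∞) / ℓ := c5
        _ ≤ (⨆ M, muN B D M) (cube z0 (L / 2)) / ℓ := ENNReal.div_le_div_right hμcube _
        _ ≤ ⨆ z, (⨆ M, muN B D M) (cube z (L / 2)) / ℓ :=
            le_iSup (fun z => (⨆ M, muN B D M) (cube z (L / 2)) / ℓ) z0
    -- Claim 2 : inf of w is at most volume K
    have claim2 : (⨅ N, w N) ≤ volume K := by
      by_contra hcon
      push_neg at hcon
      obtain ⟨c', hc1, hc2⟩ := exists_between hcon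
      have hth := tendsto_measure_cthickening_of_isCompact (μ := volume) hKc
      have hev : ∀ᶠ δ in 𝓝[>] (0:ℝ), volume (Metric.cthickening δ K) < c' :=
        (hth.mono_left nhdsWithin_le_nhds).eventually_lt_const hc1
      obtain ⟨δ, hδsmall, hδpos⟩ := (hev.and (eventually_mem_nhdsWithin)).exists
      rw [Set.mem_Ioi] at hδpos
      obtain ⟨N, hN⟩ := (vec_small hB hdet L hδpos).exists
      have hwN : w N ≤ volume (Metric.cthickening δ K) := by
        refine measure_mono ?_
        intro x hx
        obtain ⟨k, hk, u, hu, rfl⟩ := Set.mem_add.1 hx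
        obtain ⟨v, hv, rfl⟩ := hu
        have hvL : ∀ i, |v i| ≤ L := by
          intro i
          have := hv i
          simpa using this
        have hnorm : ‖Matrix.toEuclideanLin (B⁻¹ ^ N) v‖ ≤ δ := hN v hvL
        refine Metric.mem_cthickening_of_dist_le _ k δ K hk ?_
        rw [dist_eq_norm]
        rw [show k + Matrix.toEuclideanLin (B⁻¹ ^ N) v - k
          = Matrix.toEuclideanLin (B⁻¹ ^ N) v by abel]
        exact hnorm
      have : (⨅ N, w N) < (⨅ N, w N) :=
        lt_of_le_of_lt ((iInf_le w N).trans (hwN.trans hδsmall.le)) hc2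
      exact absurd this (lt_irrefl _)
    -- combine
    calc (volume K)⁻¹ ≤ (⨅ N, w N)⁻¹ := ENNReal.inv_le_inv.2 claim2
      _ = ⨆ N, (w N)⁻¹ := ENNReal.inv_iInf w
      _ ≤ ⨆ z, (⨆ M, muN B D M) (cube z (L / 2)) / ℓ := iSup_le claim1
  -- conclude via frequently
  refine Filter.le_limsup_of_frequently_le ?_
  exact ((eventually_gt_atTop (0:ℝ)).frequently).mono fun L hL => main L hL

end BeurlingAux

/-- **Theorem (Lebesgue measure of self-affine sets).** If `B` is an expanding real `n×n` matrix,
`D ⊆ ℝⁿ` is finite with `0 ∈ D` and `card D = |det B| ∈ ℤ`, and `K = K(B,D)` is the self-affine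
set (the unique nonempty compact set with `B·K = ⋃_{d∈D} (K+d)`), then
`|K(B,D)| = (D⁺(μ))⁻¹` as an equality in `[0,∞]`. -/
theorem lebesgue_measure_eq_inv_upper_beurling {n : ℕ} (B : Matrix (Fin n) (Fin n) ℝ)
    (hB : ∀ μ ∈ spectrum ℂ (B.map (algebraMap ℝ ℂ)), 1 < ‖μ‖)
    (m : ℤ) (hm : |B.det| = (m : ℝ))
    (D : Finset (EuclideanSpace ℝ (Fin n))) (hD0 : (0 : EuclideanSpace ℝ (Fin n)) ∈ D)
    (hcard : (D.card : ℝ) = |B.det|)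
    (K : Set (EuclideanSpace ℝ (Fin n))) (hKc : IsCompact K) (hKne : K.Nonempty)
    (hK : Matrix.toEuclideanLin B '' K = ⋃ d ∈ D, (fun x => x + d) '' K) :
    volume K = (beurlingUpper (selfAffineMeasure B D))⁻¹ := by
  have hdet : IsUnit B.det := by
    rw [isUnit_iff_ne_zero]
    intro h
    rw [h, abs_zero] at hcard
    have hD : D.card = 0 := by exact_mod_cast hcard
    rw [Finset.card_eq_zero] at hD
    rw [hD] at hD0
    exact absurd hD0 (Finset.notMem_empty _)
  have hrfl : beurlingUpper (selfAffineMeasure B D)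
      = Filter.limsup (fun N : ℝ => ⨆ z : EuclideanSpace ℝ (Fin n),
          (⨆ M, BeurlingAux.muN B D M) (BeurlingAux.cube z (N / 2))
            / ENNReal.ofReal (N ^ n)) atTop := rfl
  have hlb := BeurlingAux.lower_bound hB hdet hD0 hcard hKc hKne hK
  rcases eq_or_ne (volume K) 0 with h0 | h0
  · rw [h0, ENNReal.inv_zero] at hlb
    have htop : beurlingUpper (selfAffineMeasure B D) = ⊤ := by
      rw [hrfl]
      exact top_unique hlb
    rw [htop, h0, ENNReal.inv_top]
  · have hub := BeurlingAux.upper_bound hD0 hcard hKc hK h0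
    have heq : beurlingUpper (selfAffineMeasure B D) = (volume K)⁻¹ := by
      rw [hrfl]
      exact le_antisymm hub hlb
    rw [heq, inv_inv]
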